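/- For λ > 0, s > r > 0, the function H(x) = (6/(λ^3 (s-r)^2 (2s+r) x^3))·((2 + λ r x)e^{-λ r x} - (2 + (2s-r)λ x + λ^2 s(s-r)x^2)e^{-λ s x}) satisfies ∫_0^∞ H(x) dx = 3/(λ(2s+r)). -/

import Mathlib

open MeasureTheory Real Set Filter

lemma phi_lim : Tendsto (fun t : ℝ => (Real.exp t - 1 - t) / t ^ 2) (nhdsWithin 0 {(0:ℝ)}ᶜ) (nhds (1/2)) := by
  have h0 : Tendsto (fun t : ℝ => (Real.exp t - 1 - t) / t ^ 2 - 1/2) (nhdsWithin 0 {(0:ℝ)}ᶜ) (nhds 0) := by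
    apply squeeze_zero_norm' (a := fun t : ℝ => (2/9) * |t|)
    · filter_upwards [inter_mem_nhdsWithin {(0:ℝ)}ᶜ (Metric.ball_mem_nhds (0:ℝ) one_pos)] with t ht
      obtain ⟨ht0, htb⟩ := ht
      have ht0 : t ≠ 0 := ht0
      have htb : |t| ≤ 1 := by
        have := mem_ball_iff_norm.mp htb
        simp only [sub_zero, Real.norm_eq_abs] at this
        linarith
      have hb := Real.exp_bound htb (n := 3) (by norm_num)
      have hsum : ∑ m ∈ Finset.range 3, t ^ m / (Nat.factorial m) = 1 + t + t^2/2 := by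
        norm_num [Finset.sum_range_succ, Nat.factorial]
      rw [hsum] at hb
      have ht2 : t^2 > 0 := by positivity
      have : (Real.exp t - 1 - t) / t ^ 2 - 1/2 = (Real.exp t - (1 + t + t^2/2)) / t^2 := by
        field_simp
        ring
      rw [this, Real.norm_eq_abs, abs_div, abs_of_pos ht2, div_le_iff₀ ht2]
      calc |Real.exp t - (1 + t + t^2/2)| ≤ |t|^3 * ((3:ℕ).succ / ((Nat.factorial 3) * 3)) := hb
        _ = 2/9 * |t| * t^2 := by
            rw [show ((3:ℕ).succ : ℝ) / ((Nat.factorial 3 : ℕ) * 3) = 2/9 by norm_num [Nat.factorial]]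
            rw [show |t|^3 = |t| * t^2 by rw [pow_succ' , sq_abs]]
            ring
    · have : Tendsto (fun t : ℝ => (2/9) * |t|) (nhds 0) (nhds 0) := by
        have := (continuous_abs.tendsto (0:ℝ)).const_mul (2/9:ℝ)
        simpa using this
      exact this.mono_left nhdsWithin_le_nhds
  have := h0.add_const (1/2:ℝ)
  simpa using this

lemma psi_lim : Tendsto (fun t : ℝ => (Real.exp t - 1) / t) (nhdsWithin 0 {(0:ℝ)}ᶜ) (nhds 1) := by
  have h := Real.hasDerivAt_exp 0
  rw [hasDerivAt_iff_tendsto_slope] at h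
  rw [Real.exp_zero] at h
  have : (fun t : ℝ => (Real.exp t - 1) / t) = slope Real.exp 0 := by
    ext t; rw [slope_def_field]; simp
  rw [this]; exact h

noncomputable def Gaux (a b x : ℝ) : ℝ :=
  if x ≤ 0 then -(b-a)^2/2
  else (Real.exp (-(b*x)) - Real.exp (-(a*x)))/x^2 + (b-a)*Real.exp (-(b*x))/x

lemma helper_integral (a b : ℝ) (ha : 0 < a) (hab : a < b) :
    ∫ x in Set.Ioi (0:ℝ), (1/x^3) * ((2 + a*x) * Real.exp (-(a*x)) -
      (2 + (2*b-a)*x + b*(b-a)*x^2) * Real.exp (-(b*x))) = (b-a)^2/2 := by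
  have hb : 0 < b := ha.trans hab
  set g' : ℝ → ℝ := fun x => (1/x^3) * ((2 + a*x) * Real.exp (-(a*x)) -
      (2 + (2*b-a)*x + b*(b-a)*x^2) * Real.exp (-(b*x))) with hg'def
  -- derivative
  have hderiv : ∀ x ∈ Set.Ioi (0:ℝ), HasDerivAt (Gaux a b) (g' x) x := by
    intro x hx
    have hx0 : (0:ℝ) < x := hx
    have hxne : x ≠ 0 := hx0.ne'
    have ha' : HasDerivAt (fun y : ℝ => -(a*y)) (-a) x := by
      simpa using ((hasDerivAt_id x).const_mul a).fun_neg
    have hb' : HasDerivAt (fun y : ℝ => -(b*y)) (-b) x := by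
      simpa using ((hasDerivAt_id x).const_mul b).fun_neg
    have hea : HasDerivAt (fun y : ℝ => Real.exp (-(a*y))) (Real.exp (-(a*x)) * (-a)) x := ha'.exp
    have heb : HasDerivAt (fun y : ℝ => Real.exp (-(b*y))) (Real.exp (-(b*x)) * (-b)) x := hb'.exp
    have hx2 : HasDerivAt (fun y : ℝ => y^2) (2*x) x := by
      simpa using hasDerivAt_pow 2 x
    have h1 := (heb.sub hea).div hx2 (by positivity)
    have h2 := (heb.const_mul (b-a)).div (hasDerivAt_id x) hxne
    have hF := h1.add h2
    have hev : Gaux a b =ᶠ[nhds x] (fun y : ℝ =>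
        (Real.exp (-(b*y)) - Real.exp (-(a*y)))/y^2 + (b-a)*Real.exp (-(b*y))/y) := by
      filter_upwards [Ioi_mem_nhds hx0] with y hy
      simp [Gaux, not_le.mpr (show (0:ℝ) < y from hy)]
    refine (hF.congr_of_eventuallyEq hev).congr_deriv ?_
    have hexpa : Real.exp (-(a*x)) ≠ 0 := (Real.exp_pos _).ne'
    simp only [hg'def, Pi.sub_apply, id]
    field_simp [hg'def]
    ring
  -- nonnegativity
  have hpos : ∀ x ∈ Set.Ioi (0:ℝ), 0 ≤ g' x := by
    intro x hx
    have hx0 : (0:ℝ) < x := hx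
    have key := Real.quadratic_le_exp_of_nonneg (show (0:ℝ) ≤ (b-a)*x by nlinarith)
    have hsplit : Real.exp (-(a*x)) = Real.exp ((b-a)*x) * Real.exp (-(b*x)) := by
      rw [← Real.exp_add]; ring_nf
    have hebpos : (0:ℝ) < Real.exp (-(b*x)) := Real.exp_pos _
    have h2 : (2 + (2*b-a)*x + b*(b-a)*x^2) ≤ (2+a*x) * Real.exp ((b-a)*x) := by
      have hq := mul_le_mul_of_nonneg_left key (show (0:ℝ) ≤ 2 + a*x by nlinarith)
      nlinarith [mul_pos (mul_pos ha (sub_pos.mpr hab)) (pow_pos hx0 3),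
        mul_pos (mul_pos (mul_pos ha (sub_pos.mpr hab)) (sub_pos.mpr hab)) (pow_pos hx0 3)]
    have h3 : (2 + (2*b-a)*x + b*(b-a)*x^2) * Real.exp (-(b*x)) ≤ (2+a*x) * Real.exp (-(a*x)) := by
      rw [hsplit, ← mul_assoc]
      exact mul_le_mul_of_nonneg_right h2 hebpos.le
    have : (0:ℝ) ≤ 1/x^3 := by positivity
    simp only [hg'def]
    exact mul_nonneg this (by linarith)
  -- limit at infinity
  have htop : Tendsto (Gaux a b) atTop (nhds 0) := by
    have hmb : Tendsto (fun x : ℝ => -(b*x)) atTop atBot :=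
      tendsto_neg_atTop_atBot.comp (Tendsto.const_mul_atTop hb tendsto_id)
    have hma : Tendsto (fun x : ℝ => -(a*x)) atTop atBot :=
      tendsto_neg_atTop_atBot.comp (Tendsto.const_mul_atTop ha tendsto_id)
    have h1 : Tendsto (fun x : ℝ => Real.exp (-(b*x))) atTop (nhds 0) :=
      Real.tendsto_exp_atBot.comp hmb
    have h2 : Tendsto (fun x : ℝ => Real.exp (-(a*x))) atTop (nhds 0) :=
      Real.tendsto_exp_atBot.comp hma
    have h3 : Tendsto (fun x : ℝ => x^2) atTop atTop := tendsto_pow_atTop (by norm_num)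
    have term1 : Tendsto (fun x : ℝ => (Real.exp (-(b*x)) - Real.exp (-(a*x)))/x^2) atTop (nhds 0) :=
      Tendsto.div_atTop (by simpa using h1.sub h2) h3
    have term2 : Tendsto (fun x : ℝ => (b-a)*Real.exp (-(b*x))/x) atTop (nhds 0) :=
      Tendsto.div_atTop (by simpa using h1.const_mul (b-a)) tendsto_id
    have hsum : Tendsto (fun x : ℝ =>
        (Real.exp (-(b*x)) - Real.exp (-(a*x)))/x^2 + (b-a)*Real.exp (-(b*x))/x) atTop (nhds 0) := by
      simpa using term1.add term2
    refine hsum.congr' ?_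
    filter_upwards [eventually_gt_atTop (0:ℝ)] with x hx
    simp [Gaux, not_le.mpr hx]
  -- continuity at 0 from the right
  have hcont : ContinuousWithinAt (Gaux a b) (Set.Ici 0) 0 := by
    have hmapb : Tendsto (fun x : ℝ => -(b*x)) (nhdsWithin 0 (Set.Ioi 0)) (nhdsWithin 0 {(0:ℝ)}ᶜ) := by
      apply tendsto_nhdsWithin_of_tendsto_nhds_of_eventually_within
      · have hc : Continuous fun x : ℝ => -(b*x) := by continuity
        simpa using (hc.tendsto 0).mono_left nhdsWithin_le_nhds
      · filter_upwards [self_mem_nhdsWithin] with x hx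
        have hx0 : (0:ℝ) < x := hx
        simp only [Set.mem_compl_iff, Set.mem_singleton_iff]
        nlinarith
    have hmapa : Tendsto (fun x : ℝ => -(a*x)) (nhdsWithin 0 (Set.Ioi 0)) (nhdsWithin 0 {(0:ℝ)}ᶜ) := by
      apply tendsto_nhdsWithin_of_tendsto_nhds_of_eventually_within
      · have hc : Continuous fun x : ℝ => -(a*x) := by continuity
        simpa using (hc.tendsto 0).mono_left nhdsWithin_le_nhds
      · filter_upwards [self_mem_nhdsWithin] with x hx
        have hx0 : (0:ℝ) < x := hx
        simp only [Set.mem_compl_iff, Set.mem_singleton_iff]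
        nlinarith
    have t1 := phi_lim.comp hmapb
    have t2 := phi_lim.comp hmapa
    have t3 := psi_lim.comp hmapb
    have comb := ((t1.const_mul (b^2)).sub (t2.const_mul (a^2))).sub (t3.const_mul ((b-a)*b))
    have hright : Tendsto (Gaux a b) (nhdsWithin 0 (Set.Ioi 0)) (nhds (-(b-a)^2/2)) := by
      rw [show -(b-a)^2/2 = b^2*(1/2) - a^2*(1/2) - (b-a)*b*1 by ring]
      refine comb.congr' ?_
      filter_upwards [self_mem_nhdsWithin] with x hx
      have hx0 : (0:ℝ) < x := hx
      have hxne : x ≠ 0 := hx0.ne'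
      have hane : a*x ≠ 0 := by positivity
      have hbne : b*x ≠ 0 := by positivity
      simp only [Function.comp, Gaux, if_neg (not_le.mpr hx0)]
      field_simp
      ring
    have hsplit : nhdsWithin (0:ℝ) (Set.Ici 0) = nhdsWithin 0 {0} ⊔ nhdsWithin 0 (Set.Ioi 0) := by
      rw [← nhdsWithin_union]
      congr 1
      ext y
      simp only [Set.mem_Ici, Set.mem_union, Set.mem_singleton_iff, Set.mem_Ioi]
      constructor
      · intro h; rcases eq_or_lt_of_le h with h | h
        · exact Or.inl h.symm
        · exact Or.inr h
      · rintro (h | h) <;> simp [h, le_of_lt]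
    unfold ContinuousWithinAt
    rw [hsplit, tendsto_sup]
    constructor
    · rw [nhdsWithin_singleton]
      exact tendsto_pure_nhds _ _
    · rw [show Gaux a b 0 = -(b-a)^2/2 by simp [Gaux]]
      exact hright
  have := integral_Ioi_of_hasDerivAt_of_nonneg hcont hderiv hpos htop
  rw [this]
  simp [Gaux]
  ring

theorem stit_mean_length_interior_segment (l r s : ℝ) (hl : 0 < l) (hr : 0 < r) (hrs : r < s) :
    ∫ x in Set.Ioi (0:ℝ),
      (6 / (l ^ 3 * (s - r) ^ 2 * (2 * s + r) * x ^ 3)) *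
        ((2 + l * r * x) * Real.exp (-(l * r * x)) -
         (2 + (2 * s - r) * l * x + l ^ 2 * s * (s - r) * x ^ 2) * Real.exp (-(l * s * x))) =
      3 / (l * (2 * s + r)) := by
  have hsr : (0:ℝ) < s - r := by linarith
  have h2sr : (0:ℝ) < 2*s + r := by linarith
  have key := helper_integral (l*r) (l*s) (by positivity) (by nlinarith)
  have hcongr : ∫ x in Set.Ioi (0:ℝ),
      (6 / (l ^ 3 * (s - r) ^ 2 * (2 * s + r) * x ^ 3)) *
        ((2 + l * r * x) * Real.exp (-(l * r * x)) -
         (2 + (2 * s - r) * l * x + l ^ 2 * s * (s - r) * x ^ 2) * Real.exp (-(l * s * x)))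
      = ∫ x in Set.Ioi (0:ℝ), (6 / (l ^ 3 * (s - r) ^ 2 * (2 * s + r))) *
          ((1/x^3) * ((2 + (l*r)*x) * Real.exp (-(l*r*x)) -
            (2 + (2*(l*s)-(l*r))*x + (l*s)*((l*s)-(l*r))*x^2) * Real.exp (-(l*s*x)))) := by
    apply setIntegral_congr_fun measurableSet_Ioi
    intro x hx
    have hx0 : (0:ℝ) < x := hx
    have hxne : x ≠ 0 := hx0.ne'
    have hlne : l ≠ 0 := hl.ne'
    have hsrne : s - r ≠ 0 := hsr.ne'
    have h2srne : 2*s + r ≠ 0 := h2sr.ne'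
    field_simp
  rw [hcongr, MeasureTheory.integral_const_mul, key]
  field_simp
  ring
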